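/- arXiv:2211.08262 — 2 statements merged into one kernel-verified Lean document; each statement's English description precedes it below -/
import Mathlib

section
/- For a positive parameter θ > 0 and exponent 0 < p ≤ 2, the Gaussian-type kernel k(x,y) = exp(−θ|x−y|^p) on ℝ is positive semidefinite: for any points x_1,…,x_n ∈ ℝ, the matrix [exp(−θ|x_i−x_j|^p)] is positive semidefinite. -/
open Matrix Finset Real MeasureTheory Set


variable {m : Type*} [Fintype m]

private def QF (A : Matrix m m ℝ) (c : m → ℝ) : ℝ := ∑ i, ∑ j, c i * c j * A i j

private lemma psd_symm {A : Matrix m m ℝ} (hA : A.PosSemidef) (i j : m) : A i j = A j i := by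
  have := congrFun (congrFun hA.1 i) j
  simpa [Matrix.conjTranspose_apply] using this.symm

private lemma posSemidef_of_qf (A : Matrix m m ℝ) (hs : ∀ i j, A i j = A j i)
    (h : ∀ c : m → ℝ, 0 ≤ QF A c) : A.PosSemidef := by
  refine Matrix.PosSemidef.of_dotProduct_mulVec_nonneg ?_ ?_
  · ext i j
    simpa [Matrix.conjTranspose_apply] using hs j i
  · intro c
    show (0:ℝ) ≤ star c ⬝ᵥ (A *ᵥ c)
    have h2 := h c
    simp only [QF] at h2
    convert h2 using 1
    simp only [dotProduct, mulVec, dotProduct, Finset.mul_sum, Pi.star_apply, star_trivial]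
    exact Finset.sum_congr rfl fun i _ => Finset.sum_congr rfl fun j _ => by ring

private lemma qf_nonneg {A : Matrix m m ℝ} (hA : A.PosSemidef) (c : m → ℝ) : 0 ≤ QF A c := by
  have h2 : (0:ℝ) ≤ star c ⬝ᵥ (A *ᵥ c) := hA.dotProduct_mulVec_nonneg c
  simp only [QF]
  convert h2 using 1
  simp only [dotProduct, mulVec, dotProduct, Finset.mul_sum, Pi.star_apply, star_trivial]
  exact Finset.sum_congr rfl fun i _ => Finset.sum_congr rfl fun j _ => by ring

private lemma schur {A B : Matrix m m ℝ} [DecidableEq m] (hA : A.PosSemidef) (hB : B.PosSemidef) :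
    (Matrix.of fun i j => A i j * B i j).PosSemidef := by
  obtain ⟨M, hM⟩ : ∃ M : Matrix m m ℝ, A = Mᴴ * M := by
    open scoped MatrixOrder in
    obtain ⟨X, hX, -, hXA⟩ := sub_zero A ▸
      CFC.exists_sqrt_of_isSelfAdjoint_of_quasispectrumRestricts hA.isHermitian
        (QuasispectrumRestricts.nnreal_of_nonneg hA.nonneg)
    rw [sub_zero] at hXA
    exact ⟨X, by rw [← hXA]; exact congrArg (· * X) hX.star_eq.symm⟩
  have hAij : ∀ i j, A i j = ∑ k, M k i * M k j := by
    intro i j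
    rw [hM]
    simp [Matrix.mul_apply, Matrix.conjTranspose_apply]
  refine posSemidef_of_qf _ (fun i j => by
    simp only [Matrix.of_apply]
    rw [psd_symm hA i j, psd_symm hB i j]) ?_
  intro c
  have expand : ∀ i j : m, c i * c j * (A i j * B i j)
      = ∑ k, (c i * M k i) * (c j * M k j) * B i j := by
    intro i j
    rw [hAij, Finset.sum_mul, Finset.mul_sum]
    exact Finset.sum_congr rfl fun k _ => by ring
  have key : QF (Matrix.of fun i j => A i j * B i j) c
      = ∑ k, QF B (fun i => c i * M k i) := by
    simp only [QF, Matrix.of_apply]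
    calc ∑ i, ∑ j, c i * c j * (A i j * B i j)
        = ∑ i, ∑ j, ∑ k, (c i * M k i) * (c j * M k j) * B i j :=
          Finset.sum_congr rfl fun i _ => Finset.sum_congr rfl fun j _ => expand i j
      _ = ∑ i, ∑ k, ∑ j, (c i * M k i) * (c j * M k j) * B i j :=
          Finset.sum_congr rfl fun i _ => Finset.sum_comm
      _ = ∑ k, ∑ i, ∑ j, (c i * M k i) * (c j * M k j) * B i j := Finset.sum_comm
      _ = ∑ k, QF B (fun i => c i * M k i) := rfl
  rw [key]
  exact Finset.sum_nonneg fun k _ => qf_nonneg hB _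

private lemma psd_ones : (Matrix.of fun _ _ : m => (1 : ℝ)).PosSemidef := by
  refine posSemidef_of_qf _ (fun i j => rfl) fun c => ?_
  have : QF (Matrix.of fun _ _ : m => (1 : ℝ)) c = (∑ i, c i) ^ 2 := by
    simp only [QF, Matrix.of_apply, mul_one, sq, Finset.sum_mul_sum]
  rw [this]; positivity

private lemma psd_entrywise_pow {A : Matrix m m ℝ} [DecidableEq m] (hA : A.PosSemidef) (k : ℕ) :
    (Matrix.of fun i j => A i j ^ k).PosSemidef := by
  induction k with
  | zero =>
    have h0 : (Matrix.of fun i j => A i j ^ 0) = Matrix.of fun _ _ : m => (1 : ℝ) := by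
      ext i j; simp
    rw [h0]; exact psd_ones
  | succ k ih =>
    have h1 : (Matrix.of fun i j => A i j ^ (k + 1))
        = Matrix.of fun i j => (Matrix.of fun i j => A i j ^ k) i j * A i j := by
      ext i j; simp [pow_succ]
    rw [h1]; exact schur ih hA

private lemma psd_entrywise_exp {A : Matrix m m ℝ} [DecidableEq m] (hA : A.PosSemidef) :
    (Matrix.of fun i j => Real.exp (A i j)).PosSemidef := by
  refine posSemidef_of_qf _ (fun i j => by simp [psd_symm hA i j]) fun c => ?_
  have hexp : ∀ y : ℝ, Real.exp y = ∑' k : ℕ, y ^ k / (Nat.factorial k : ℝ) := by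
    intro y
    rw [Real.exp_eq_exp_ℝ, NormedSpace.exp_eq_tsum_div]
  have hsumm : ∀ i j : m, Summable (fun k : ℕ => c i * c j * (A i j ^ k / (Nat.factorial k : ℝ))) :=
    fun i j => (Real.summable_pow_div_factorial (A i j)).mul_left _
  have key : QF (Matrix.of fun i j => Real.exp (A i j)) c
      = ∑' k : ℕ, ∑ i, ∑ j, c i * c j * (A i j ^ k / (Nat.factorial k : ℝ)) := by
    simp only [QF, Matrix.of_apply]
    calc ∑ i, ∑ j, c i * c j * Real.exp (A i j)
        = ∑ i, ∑ j, ∑' k : ℕ, c i * c j * (A i j ^ k / (Nat.factorial k : ℝ)) := by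
          refine Finset.sum_congr rfl fun i _ => Finset.sum_congr rfl fun j _ => ?_
          rw [hexp, Summable.tsum_mul_left _ (Real.summable_pow_div_factorial (A i j))]
      _ = ∑ i, ∑' k : ℕ, ∑ j, c i * c j * (A i j ^ k / (Nat.factorial k : ℝ)) :=
          Finset.sum_congr rfl fun i _ => (Summable.tsum_finsetSum fun j _ => hsumm i j).symm
      _ = ∑' k : ℕ, ∑ i, ∑ j, c i * c j * (A i j ^ k / (Nat.factorial k : ℝ)) :=
          (Summable.tsum_finsetSum fun i _ => summable_sum fun j _ => hsumm i j).symm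
  rw [key]
  refine tsum_nonneg fun k => ?_
  have : ∑ i, ∑ j, c i * c j * (A i j ^ k / (Nat.factorial k : ℝ))
      = (1 / (Nat.factorial k : ℝ)) * QF (Matrix.of fun i j => A i j ^ k) c := by
    simp only [QF, Matrix.of_apply, Finset.mul_sum]
    exact Finset.sum_congr rfl fun i _ => Finset.sum_congr rfl fun j _ => by ring
  rw [this]
  have := qf_nonneg (psd_entrywise_pow hA k) c
  positivity

private lemma psd_diag_scale {A : Matrix m m ℝ} (hA : A.PosSemidef) (d : m → ℝ) :
    (Matrix.of fun i j => d i * A i j * d j).PosSemidef := by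
  refine posSemidef_of_qf _ (fun i j => by simp [psd_symm hA i j]; ring) fun c => ?_
  have : QF (Matrix.of fun i j => d i * A i j * d j) c = QF A (fun i => c i * d i) := by
    simp only [QF, Matrix.of_apply]
    exact Finset.sum_congr rfl fun i _ => Finset.sum_congr rfl fun j _ => by ring
  rw [this]; exact qf_nonneg hA _

private lemma split3 {m : Type*} [Fintype m] (A B C : Matrix m m ℝ) :
    (∑ i, ∑ j, (A i j + B i j - C i j))
      = (∑ i, ∑ j, A i j) + (∑ i, ∑ j, B i j) - (∑ i, ∑ j, C i j) := by
  simp only [Finset.sum_add_distrib, Finset.sum_sub_distrib]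

private lemma dsum_mul {m : Type*} [Fintype m] (f g : m → ℝ) :
    ∑ i, ∑ j, f i * g j = (∑ i, f i) * (∑ j, g j) := (Finset.sum_mul_sum _ _ _ _).symm

private lemma negdef_sq (θ : ℝ) (hθ : 0 ≤ θ) {k : ℕ} (y c : Fin k → ℝ)
    (hc : ∑ i, c i = 0) :
    ∑ i, ∑ j, c i * c j * (θ * |y i - y j| ^ (2:ℝ)) ≤ 0 := by
  have habs : ∀ t : ℝ, |t| ^ (2:ℝ) = t ^ (2:ℕ) := fun t => by
    rw [show (2:ℝ) = ((2:ℕ):ℝ) by norm_num, Real.rpow_natCast, sq_abs]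
  have key : ∑ i, ∑ j, c i * c j * (θ * |y i - y j| ^ (2:ℝ))
      = - (2 * θ * (∑ i, c i * y i) ^ 2) := by
    calc ∑ i, ∑ j, c i * c j * (θ * |y i - y j| ^ (2:ℝ))
        = ∑ i, ∑ j, ((θ * (c i * y i ^ 2)) * c j + c i * (θ * (c j * y j ^ 2))
            - (2 * θ * (c i * y i)) * (c j * y j)) := by
          refine Finset.sum_congr rfl fun i _ => Finset.sum_congr rfl fun j _ => ?_
          rw [habs]; ring
      _ = (∑ i, ∑ j, (θ * (c i * y i ^ 2)) * c j)
            + (∑ i, ∑ j, c i * (θ * (c j * y j ^ 2)))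
            - ∑ i, ∑ j, (2 * θ * (c i * y i)) * (c j * y j) :=
          split3 (Matrix.of fun i j => (θ * (c i * y i ^ 2)) * c j)
            (Matrix.of fun i j => c i * (θ * (c j * y j ^ 2)))
            (Matrix.of fun i j => (2 * θ * (c i * y i)) * (c j * y j))
      _ = (∑ i, θ * (c i * y i ^ 2)) * (∑ j, c j)
            + (∑ i, c i) * (∑ j, θ * (c j * y j ^ 2))
            - (∑ i, 2 * θ * (c i * y i)) * (∑ j, c j * y j) := by
          rw [dsum_mul, dsum_mul, dsum_mul]
      _ = - (2 * θ * (∑ i, c i * y i) ^ 2) := by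
          rw [hc]
          simp only [mul_zero, zero_mul, zero_add, zero_sub, neg_inj, sq]
          rw [← Finset.mul_sum]; ring
  rw [key]
  have : 0 ≤ 2 * θ * (∑ i, c i * y i) ^ 2 := by positivity
  linarith

private lemma schoenberg_core (ψ : ℝ → ℝ) (hψ0 : ψ 0 = 0) (hsym : ∀ t, ψ (-t) = ψ t)
    (hneg : ∀ (k : ℕ) (y c : Fin k → ℝ), ∑ i, c i = 0 →
      ∑ i, ∑ j, c i * c j * ψ (y i - y j) ≤ 0)
    {n : ℕ} (x : Fin n → ℝ) :
    (Matrix.of fun i j : Fin n => Real.exp (-ψ (x i - x j))).PosSemidef := by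
  have hφ : (Matrix.of fun i j : Fin n => ψ (x i) + ψ (x j) - ψ (x i - x j)).PosSemidef := by
    refine posSemidef_of_qf _ (fun i j => by
      simp only [Matrix.of_apply]
      rw [show x j - x i = -(x i - x j) by ring, hsym]
      ring) ?_
    intro c
    set s := ∑ i, c i with hs
    set u := ∑ i, c i * ψ (x i) with hu
    set T := ∑ i, ∑ j, c i * c j * ψ (x i - x j) with hT
    set c' : Fin (n+1) → ℝ := Fin.cons (-s) c with hc'def
    set y' : Fin (n+1) → ℝ := Fin.cons 0 x with hy'def
    have hc' : ∑ i, c' i = 0 := by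
      rw [hc'def, Fin.sum_cons]; simp [hs]
    have hext := hneg (n + 1) y' c' hc'
    have c'0 : c' 0 = -s := rfl
    have c'succ : ∀ i : Fin n, c' i.succ = c i := fun i => rfl
    have y'0 : y' 0 = 0 := rfl
    have y'succ : ∀ i : Fin n, y' i.succ = x i := fun i => rfl
    have hEXT : ∑ i, ∑ j, c' i * c' j * ψ (y' i - y' j) = -(s*u) + (-(s*u) + T) := by
      rw [Fin.sum_univ_succ]
      congr 1
      · rw [Fin.sum_univ_succ]
        simp only [c'0, c'succ, y'0, y'succ, sub_self, hψ0, mul_zero, zero_sub, hsym, zero_add]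
        rw [show -(s*u) = -s * u by ring, hu, Finset.mul_sum]
        exact Finset.sum_congr rfl fun j _ => by ring
      · have row : ∀ i : Fin n, ∑ j, c' i.succ * c' j * ψ (y' i.succ - y' j)
            = -(s * (c i * ψ (x i))) + ∑ j, c i * c j * ψ (x i - x j) := by
          intro i
          rw [Fin.sum_univ_succ]
          simp only [c'0, c'succ, y'0, y'succ, sub_zero]
          congr 1
          ring
        rw [Finset.sum_congr rfl fun i _ => row i, Finset.sum_add_distrib]
        congr 1
        rw [hu, Finset.mul_sum, ← Finset.sum_neg_distrib]
    have hQF : QF (Matrix.of fun i j : Fin n => ψ (x i) + ψ (x j) - ψ (x i - x j)) c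
        = u * s + s * u - T := by
      simp only [QF, Matrix.of_apply]
      calc ∑ i, ∑ j, c i * c j * (ψ (x i) + ψ (x j) - ψ (x i - x j))
          = ∑ i, ∑ j, ((c i * ψ (x i)) * c j + c i * (c j * ψ (x j))
              - c i * c j * ψ (x i - x j)) :=
            Finset.sum_congr rfl fun i _ => Finset.sum_congr rfl fun j _ => by ring
        _ = (∑ i, ∑ j, (c i * ψ (x i)) * c j) + (∑ i, ∑ j, c i * (c j * ψ (x j)))
              - ∑ i, ∑ j, c i * c j * ψ (x i - x j) :=
            split3 (Matrix.of fun i j => (c i * ψ (x i)) * c j)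
              (Matrix.of fun i j => c i * (c j * ψ (x j)))
              (Matrix.of fun i j => c i * c j * ψ (x i - x j))
        _ = u * s + s * u - T := by
            rw [dsum_mul, dsum_mul]
    rw [hEXT] at hext
    rw [hQF]
    linarith
  have hexp := psd_entrywise_exp hφ
  have hfinal := psd_diag_scale hexp (fun i => Real.exp (-ψ (x i)))
  have heq : (Matrix.of fun i j : Fin n => Real.exp (-ψ (x i - x j)))
      = Matrix.of fun i j => Real.exp (-ψ (x i))
          * (Matrix.of fun i j : Fin n =>
              Real.exp ((Matrix.of fun i j : Fin n => ψ (x i) + ψ (x j) - ψ (x i - x j)) i j)) i j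
          * Real.exp (-ψ (x j)) := by
    ext i j
    simp only [Matrix.of_apply, ← Real.exp_add]
    ring_nf
  rw [heq]
  exact hfinal

private lemma kern_integrable {p : ℝ} (hp : 0 < p) (hp2 : p < 2) (t : ℝ) :
    IntegrableOn (fun s => (1 - Real.cos (t * s)) * s ^ (-(1+p))) (Set.Ioi (0:ℝ)) := by
  have hcont : ContinuousOn (fun s : ℝ => (1 - Real.cos (t * s)) * s ^ (-(1+p)))
      (Set.Ioi (0:ℝ)) := by
    intro s hs
    exact ((continuous_const.sub (Real.continuous_cos.comp
      (continuous_const.mul continuous_id))).continuousWithinAt).mul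
      ((Real.continuousAt_rpow_const s _ (Or.inl (ne_of_gt hs))).continuousWithinAt)
  have hIoi : Set.Ioc (0:ℝ) 1 ∪ Set.Ioi 1 = Set.Ioi (0:ℝ) :=
    Set.Ioc_union_Ioi_eq_Ioi zero_le_one
  rw [← hIoi]
  apply MeasureTheory.IntegrableOn.union
  · have hg : IntegrableOn (fun s : ℝ => (t^2/2) * s ^ ((1:ℝ) - p)) (Set.Ioc (0:ℝ) 1) := by
      rw [integrableOn_Ioc_iff_integrableOn_Ioo]
      exact ((intervalIntegral.integrableOn_Ioo_rpow_iff zero_lt_one).mpr (by linarith)).const_mul _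
    refine hg.mono' ((hcont.mono Set.Ioc_subset_Ioi_self).aestronglyMeasurable measurableSet_Ioc)
      ((MeasureTheory.ae_restrict_iff' measurableSet_Ioc).mpr (Filter.Eventually.of_forall ?_))
    intro s hs
    have hs0 : (0:ℝ) < s := hs.1
    have h1 : 0 ≤ 1 - Real.cos (t * s) := by linarith [Real.cos_le_one (t*s)]
    have h2 : 1 - Real.cos (t * s) ≤ (t*s)^2/2 := by
      have := Real.one_sub_sq_div_two_le_cos (x := t*s); linarith
    have h3 : (0:ℝ) < s ^ (-(1+p)) := Real.rpow_pos_of_pos hs0 _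
    rw [norm_mul, Real.norm_of_nonneg h1, Real.norm_of_nonneg h3.le]
    calc (1 - Real.cos (t * s)) * s ^ (-(1+p)) ≤ ((t*s)^2/2) * s ^ (-(1+p)) := by nlinarith
      _ = (t^2/2) * (s ^ ((2:ℕ):ℝ) * s ^ (-(1+p))) := by
          rw [Real.rpow_natCast]; ring
      _ = (t^2/2) * s ^ ((1:ℝ) - p) := by
          rw [← Real.rpow_add hs0, show ((2:ℕ):ℝ) + -(1+p) = 1 - p by push_cast; ring]
  · have hg : IntegrableOn (fun s : ℝ => 2 * s ^ (-(1+p))) (Set.Ioi (1:ℝ)) :=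
      ((integrableOn_Ioi_rpow_iff zero_lt_one).mpr (by linarith)).const_mul _
    refine hg.mono' ((hcont.mono (Set.Ioi_subset_Ioi zero_le_one)).aestronglyMeasurable
        measurableSet_Ioi)
      ((MeasureTheory.ae_restrict_iff' measurableSet_Ioi).mpr (Filter.Eventually.of_forall ?_))
    intro s hs
    have hs0 : (0:ℝ) < s := lt_trans zero_lt_one hs
    have h1 : 0 ≤ 1 - Real.cos (t * s) := by linarith [Real.cos_le_one (t*s)]
    have h2 : 1 - Real.cos (t * s) ≤ 2 := by linarith [Real.neg_one_le_cos (t*s)]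
    have h3 : (0:ℝ) < s ^ (-(1+p)) := Real.rpow_pos_of_pos hs0 _
    rw [norm_mul, Real.norm_of_nonneg h1, Real.norm_of_nonneg h3.le]
    nlinarith

private lemma kern_const_pos {p : ℝ} (hp : 0 < p) (hp2 : p < 2) :
    0 < ∫ s in Set.Ioi (0:ℝ), (1 - Real.cos s) * s ^ (-(1+p)) := by
  have hint : IntegrableOn (fun s => (1 - Real.cos s) * s ^ (-(1+p))) (Set.Ioi (0:ℝ)) := by
    have := kern_integrable hp hp2 1
    simpa using this
  have hnn : 0 ≤ᵐ[volume.restrict (Set.Ioi (0:ℝ))]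
      fun s => (1 - Real.cos s) * s ^ (-(1+p)) := by
    filter_upwards [MeasureTheory.ae_restrict_mem measurableSet_Ioi] with s hs
    have h1 : 0 ≤ 1 - Real.cos s := by linarith [Real.cos_le_one s]
    have h3 : (0:ℝ) ≤ s ^ (-(1+p)) := (Real.rpow_pos_of_pos hs _).le
    have : (0:ℝ) ≤ (1 - Real.cos s) * s ^ (-(1+p)) := mul_nonneg h1 h3
    simpa using this
  rw [MeasureTheory.setIntegral_pos_iff_support_of_nonneg_ae hnn hint]
  have hsub : Set.Ioo (Real.pi/2) Real.pi
      ⊆ Function.support (fun s => (1 - Real.cos s) * s ^ (-(1+p))) ∩ Set.Ioi 0 := by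
    intro s hs
    obtain ⟨hs1, hs2⟩ := hs
    have hpi : (0:ℝ) < Real.pi := Real.pi_pos
    have hs0 : (0:ℝ) < s := lt_trans (by linarith) hs1
    have hcos : Real.cos s ≤ 0 :=
      Real.cos_nonpos_of_pi_div_two_le_of_le hs1.le (by linarith)
    constructor
    · have h3 : (0:ℝ) < s ^ (-(1+p)) := Real.rpow_pos_of_pos hs0 _
      have : 0 < (1 - Real.cos s) * s ^ (-(1+p)) := by nlinarith
      exact ne_of_gt this
    · exact hs0
  calc (0:ENNReal) < volume (Set.Ioo (Real.pi/2) Real.pi) := by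
        rw [Real.volume_Ioo]
        have hpi : (0:ℝ) < Real.pi := Real.pi_pos
        exact ENNReal.ofReal_pos.mpr (by linarith)
    _ ≤ _ := measure_mono hsub

private lemma kern_scaling {p : ℝ} (hp : 0 < p) (hp2 : p < 2) (t : ℝ) :
    ∫ s in Set.Ioi (0:ℝ), (1 - Real.cos (t * s)) * s ^ (-(1+p))
      = |t| ^ p * ∫ s in Set.Ioi (0:ℝ), (1 - Real.cos s) * s ^ (-(1+p)) := by
  rcases eq_or_ne t 0 with rfl | ht
  · simp [Real.zero_rpow hp.ne']
  · have hb : 0 < |t| := abs_pos.mpr ht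
    have hcos : ∀ s : ℝ, Real.cos (t * s) = Real.cos (|t| * s) := by
      intro s
      rcases abs_cases t with ⟨h, _⟩ | ⟨h, _⟩
      · rw [h]
      · rw [h, show -t * s = -(t*s) by ring, Real.cos_neg]
    have h4 : |t| ^ ((1:ℝ)+p) * |t| ^ (-(1+p)) = 1 := by
      rw [← Real.rpow_add hb, show (1:ℝ)+p + -(1+p) = 0 by ring, Real.rpow_zero]
    have hfac : ∀ s : ℝ, s ∈ Set.Ioi (0:ℝ) → (1 - Real.cos (t * s)) * s ^ (-(1+p))
        = |t| ^ ((1:ℝ)+p) * ((1 - Real.cos (|t| * s)) * (|t| * s) ^ (-(1+p))) := by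
      intro s hs
      have hs0 : (0:ℝ) < s := hs
      rw [hcos, Real.mul_rpow hb.le hs0.le,
        show |t| ^ ((1:ℝ)+p) * ((1 - Real.cos (|t| * s)) * (|t| ^ (-(1+p)) * s ^ (-(1+p))))
          = (|t| ^ ((1:ℝ)+p) * |t| ^ (-(1+p))) * ((1 - Real.cos (|t| * s)) * s ^ (-(1+p))) by ring,
        h4, one_mul]
    have step1 : ∫ s in Set.Ioi (0:ℝ), (1 - Real.cos (t * s)) * s ^ (-(1+p))
        = ∫ s in Set.Ioi (0:ℝ),
            |t| ^ ((1:ℝ)+p) * ((1 - Real.cos (|t| * s)) * (|t| * s) ^ (-(1+p))) :=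
      MeasureTheory.setIntegral_congr_fun measurableSet_Ioi hfac
    rw [step1, MeasureTheory.integral_const_mul]
    have hchg := MeasureTheory.integral_comp_mul_left_Ioi
      (fun u => (1 - Real.cos u) * u ^ (-(1+p))) 0 hb
    simp only [mul_zero] at hchg
    rw [hchg, smul_eq_mul, ← mul_assoc]
    congr 1
    rw [show |t|⁻¹ = |t| ^ (-(1:ℝ)) from (Real.rpow_neg_one _).symm, ← Real.rpow_add hb,
      show (1:ℝ)+p + -1 = p by ring]

private lemma cos_sum_nonpos {k : ℕ} (y c : Fin k → ℝ) (hc : ∑ i, c i = 0) (s : ℝ) :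
    ∑ i, ∑ j, c i * c j * (1 - Real.cos ((y i - y j) * s)) ≤ 0 := by
  have key : ∑ i, ∑ j, c i * c j * (1 - Real.cos ((y i - y j) * s))
      = (∑ i, c i) * (∑ j, c j)
        + (∑ i, -(c i * Real.cos (y i * s))) * (∑ j, c j * Real.cos (y j * s))
        - (∑ i, c i * Real.sin (y i * s)) * (∑ j, c j * Real.sin (y j * s)) := by
    calc ∑ i, ∑ j, c i * c j * (1 - Real.cos ((y i - y j) * s))
        = ∑ i, ∑ j, (c i * c j + (-(c i * Real.cos (y i * s))) * (c j * Real.cos (y j * s))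
            - (c i * Real.sin (y i * s)) * (c j * Real.sin (y j * s))) := by
          refine Finset.sum_congr rfl fun i _ => Finset.sum_congr rfl fun j _ => ?_
          rw [show (y i - y j) * s = y i * s - y j * s by ring, Real.cos_sub]
          ring
      _ = (∑ i, ∑ j, c i * c j)
            + (∑ i, ∑ j, (-(c i * Real.cos (y i * s))) * (c j * Real.cos (y j * s)))
            - ∑ i, ∑ j, (c i * Real.sin (y i * s)) * (c j * Real.sin (y j * s)) :=
          split3 (Matrix.of fun i j => c i * c j)
            (Matrix.of fun i j => (-(c i * Real.cos (y i * s))) * (c j * Real.cos (y j * s)))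
            (Matrix.of fun i j => (c i * Real.sin (y i * s)) * (c j * Real.sin (y j * s)))
      _ = _ := by rw [dsum_mul, dsum_mul, dsum_mul]
  rw [key, hc, Finset.sum_neg_distrib]
  nlinarith [sq_nonneg (∑ i, c i * Real.cos (y i * s)),
    sq_nonneg (∑ i, c i * Real.sin (y i * s))]

private lemma negdef_rpow (θ p : ℝ) (hθ : 0 < θ) (hp : 0 < p) (hp2 : p < 2)
    {k : ℕ} (y c : Fin k → ℝ) (hc : ∑ i, c i = 0) :
    ∑ i, ∑ j, c i * c j * (θ * |y i - y j| ^ p) ≤ 0 := by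
  set C := ∫ s in Set.Ioi (0:ℝ), (1 - Real.cos s) * s ^ (-(1+p)) with hCdef
  have hC : 0 < C := kern_const_pos hp hp2
  have hval : ∀ t : ℝ, θ * |t| ^ p
      = (θ/C) * ∫ s in Set.Ioi (0:ℝ), (1 - Real.cos (t*s)) * s ^ (-(1+p)) := by
    intro t
    rw [kern_scaling hp hp2 t, ← hCdef]
    field_simp
  have key : ∑ i, ∑ j, c i * c j * (θ * |y i - y j| ^ p)
      = (θ/C) * ∑ i, ∑ j, c i * c j
          * ∫ s in Set.Ioi (0:ℝ), (1 - Real.cos ((y i - y j)*s)) * s ^ (-(1+p)) := by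
    rw [Finset.mul_sum]
    refine Finset.sum_congr rfl fun i _ => ?_
    rw [Finset.mul_sum]
    refine Finset.sum_congr rfl fun j _ => ?_
    rw [hval]; ring
  have hint : ∀ (t a : ℝ), Integrable
      (fun s => a * ((1 - Real.cos (t*s)) * s ^ (-(1+p)))) (volume.restrict (Set.Ioi 0)) :=
    fun t a => (kern_integrable hp hp2 t).const_mul a
  have swap : ∑ i, ∑ j, c i * c j
        * ∫ s in Set.Ioi (0:ℝ), (1 - Real.cos ((y i - y j)*s)) * s ^ (-(1+p))
      = ∫ s in Set.Ioi (0:ℝ), ∑ i, ∑ j,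
          c i * c j * ((1 - Real.cos ((y i - y j)*s)) * s ^ (-(1+p))) := by
    calc ∑ i, ∑ j, c i * c j
          * ∫ s in Set.Ioi (0:ℝ), (1 - Real.cos ((y i - y j)*s)) * s ^ (-(1+p))
        = ∑ i, ∑ j, ∫ s in Set.Ioi (0:ℝ),
            c i * c j * ((1 - Real.cos ((y i - y j)*s)) * s ^ (-(1+p))) := by
          refine Finset.sum_congr rfl fun i _ => Finset.sum_congr rfl fun j _ => ?_
          rw [MeasureTheory.integral_const_mul]
      _ = ∑ i, ∫ s in Set.Ioi (0:ℝ), ∑ j,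
            c i * c j * ((1 - Real.cos ((y i - y j)*s)) * s ^ (-(1+p))) :=
          Finset.sum_congr rfl fun i _ =>
            (MeasureTheory.integral_finset_sum univ fun j _ => hint _ _).symm
      _ = ∫ s in Set.Ioi (0:ℝ), ∑ i, ∑ j,
            c i * c j * ((1 - Real.cos ((y i - y j)*s)) * s ^ (-(1+p))) :=
          (MeasureTheory.integral_finset_sum univ fun i _ =>
            MeasureTheory.integrable_finset_sum univ fun j _ => hint _ _).symm
  have hptwise : ∀ s ∈ Set.Ioi (0:ℝ), ∑ i, ∑ j,
      c i * c j * ((1 - Real.cos ((y i - y j)*s)) * s ^ (-(1+p))) ≤ 0 := by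
    intro s hs
    have hfac : ∑ i, ∑ j, c i * c j * ((1 - Real.cos ((y i - y j)*s)) * s ^ (-(1+p)))
        = (∑ i, ∑ j, c i * c j * (1 - Real.cos ((y i - y j)*s))) * s ^ (-(1+p)) := by
      rw [Finset.sum_mul]
      refine Finset.sum_congr rfl fun i _ => ?_
      rw [Finset.sum_mul]
      exact Finset.sum_congr rfl fun j _ => by ring
    rw [hfac]
    have h1 := cos_sum_nonpos y c hc s
    have h2 : (0:ℝ) ≤ s ^ (-(1+p)) := (Real.rpow_pos_of_pos hs _).le
    exact mul_nonpos_of_nonpos_of_nonneg h1 h2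
  have hineq : ∫ s in Set.Ioi (0:ℝ), ∑ i, ∑ j,
      c i * c j * ((1 - Real.cos ((y i - y j)*s)) * s ^ (-(1+p))) ≤ 0 :=
    MeasureTheory.setIntegral_nonpos measurableSet_Ioi hptwise
  rw [key, swap]
  have hθC : 0 < θ / C := div_pos hθ hC
  exact mul_nonpos_of_nonneg_of_nonpos hθC.le hineq

/-- Schoenberg: for `θ > 0` and `0 < p ≤ 2`, the Gram matrix of the kernel
`(x,y) ↦ exp(−θ·|x−y|^p)` at any finite family of points in `ℝ` is PSD. -/
theorem exp_abs_rpow_kernel_posSemidef {n : ℕ} (θ p : ℝ)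
    (hθ : 0 < θ) (hp : 0 < p) (hp2 : p ≤ 2) (x : Fin n → ℝ) :
    (Matrix.of fun i j => Real.exp (-θ * |x i - x j| ^ p)).PosSemidef := by
  have h0 : (fun t : ℝ => θ * |t| ^ p) 0 = 0 := by
    simp [Real.zero_rpow hp.ne']
  have hsym : ∀ t : ℝ, (fun t : ℝ => θ * |t| ^ p) (-t) = (fun t : ℝ => θ * |t| ^ p) t :=
    fun t => by simp [abs_neg]
  have hneg : ∀ (k : ℕ) (y c : Fin k → ℝ), ∑ i, c i = 0 →
      ∑ i, ∑ j, c i * c j * (θ * |y i - y j| ^ p) ≤ 0 := by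
    intro k y c hc
    rcases eq_or_lt_of_le hp2 with h2 | h2
    · subst h2; exact negdef_sq θ hθ.le y c hc
    · exact negdef_rpow θ p hθ hp h2 y c hc
  have hmain := schoenberg_core (fun t => θ * |t| ^ p) h0 hsym hneg x
  have heq : (Matrix.of fun i j : Fin n => Real.exp (-θ * |x i - x j| ^ p))
      = Matrix.of fun i j : Fin n => Real.exp (-((fun t : ℝ => θ * |t| ^ p) (x i - x j))) := by
    ext i j
    simp only [Matrix.of_apply, neg_mul]
  rw [heq]
  exact hmain
end

section
/- The categorical correlation matrix of the Fully Exponential kernel is symmetric positive semidefinite with entries in [0,1]: if R_{r,s} = Π_{i=1}^{l} W^{(i)}_{r,s}·T^{(i)}_{r,s}, where each W^{(i)} is of the form exp(−d^{(i)}_r − d^{(i)}_s) with d^{(i)}_r ≥ 0, and each T^{(i)}_{r,s} = ε·exp(−(log ε)·P^{(i)}_{r,s}) with P^{(i)} symmetric PSD with unit diagonal and entries in [0,1] and ε ∈ (0,1), and the diagonal of R is overridden to 1 — then R is symmetric PSD with all entries in [0,1]. -/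
open Finset Nat

/-- Schur-product step at the level of quadratic forms. -/
lemma schurQN {n : ℕ} {A : Matrix (Fin n) (Fin n) ℝ} (hA : A.PosSemidef)
    {C : Fin n → Fin n → ℝ}
    (hC : ∀ x : Fin n → ℝ, 0 ≤ ∑ r, ∑ s, x r * C r s * x s)
    (x : Fin n → ℝ) : 0 ≤ ∑ r, ∑ s, x r * (A r s * C r s) * x s := by
  obtain ⟨m, B, hB⟩ := Matrix.posSemidef_iff_eq_sum_vecMulVec.mp hA
  have hA' : ∀ r s, A r s = ∑ t, B t r * B t s := by
    intro r s
    rw [hB, Matrix.sum_apply]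
    simp [Matrix.vecMulVec_apply]
  have key : ∀ r s : Fin n, x r * (A r s * C r s) * x s
      = ∑ t, (x r * B t r) * C r s * (x s * B t s) := by
    intro r s
    rw [hA', Finset.sum_mul, Finset.mul_sum, Finset.sum_mul]
    exact Finset.sum_congr rfl fun t _ => by ring
  calc (0:ℝ) ≤ ∑ t, ∑ r, ∑ s, (x r * B t r) * C r s * (x s * B t s) :=
        Finset.sum_nonneg fun t _ => hC (fun r => x r * B t r)
    _ = ∑ r, ∑ t, ∑ s, (x r * B t r) * C r s * (x s * B t s) := Finset.sum_comm
    _ = ∑ r, ∑ s, x r * (A r s * C r s) * x s := by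
        refine Finset.sum_congr rfl fun r _ => ?_
        rw [Finset.sum_comm]
        exact Finset.sum_congr rfl fun s _ => (key r s).symm

lemma powQN {n : ℕ} {S : Matrix (Fin n) (Fin n) ℝ} (hS : S.PosSemidef) (k : ℕ) :
    ∀ x : Fin n → ℝ, 0 ≤ ∑ r, ∑ s, x r * (S r s) ^ k * x s := by
  induction k with
  | zero =>
      intro x
      simp only [pow_zero, mul_one]
      have : ∑ r, ∑ s, x r * x s = (∑ r, x r) * (∑ s, x s) := (Finset.sum_mul_sum _ _ _ _).symm
      rw [this]
      exact mul_self_nonneg _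
  | succ k ih =>
      intro x
      have h := schurQN hS ih x
      have e : ∀ r s : Fin n, x r * S r s ^ (k+1) * x s = x r * (S r s * S r s ^ k) * x s := by
        intro r s; rw [pow_succ]; ring
      simp only [e]; exact h

lemma expQN {n : ℕ} {S : Matrix (Fin n) (Fin n) ℝ} (hS : S.PosSemidef) {c : ℝ} (hc : 0 ≤ c)
    (x : Fin n → ℝ) : 0 ≤ ∑ r, ∑ s, x r * Real.exp (c * S r s) * x s := by
  have hexp : ∀ y : ℝ, Real.exp y = ∑' k : ℕ, y ^ k / k ! := by
    intro y
    rw [Real.exp_eq_exp_ℝ, NormedSpace.exp_eq_tsum_div]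
  have hsum : ∀ r s : Fin n, Summable (fun k : ℕ => x r * ((c * S r s) ^ k / k !) * x s) :=
    fun r s => ((Real.summable_pow_div_factorial _).mul_left _).mul_right _
  have hrw : ∑ r, ∑ s, x r * Real.exp (c * S r s) * x s
      = ∑' k : ℕ, ∑ r, ∑ s, x r * ((c * S r s) ^ k / k !) * x s := by
    have h1 : ∀ r s : Fin n, x r * Real.exp (c * S r s) * x s
        = ∑' k : ℕ, x r * ((c * S r s) ^ k / k !) * x s := by
      intro r s
      rw [hexp, ← tsum_mul_left, ← tsum_mul_right]
    calc ∑ r, ∑ s, x r * Real.exp (c * S r s) * x s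
        = ∑ r, ∑ s, ∑' k : ℕ, x r * ((c * S r s) ^ k / k !) * x s := by
          exact Finset.sum_congr rfl fun r _ => Finset.sum_congr rfl fun s _ => h1 r s
      _ = ∑ r, ∑' k : ℕ, ∑ s, x r * ((c * S r s) ^ k / k !) * x s := by
          refine Finset.sum_congr rfl fun r _ => ?_
          exact (Summable.tsum_finsetSum fun s _ => hsum r s).symm
      _ = ∑' k : ℕ, ∑ r, ∑ s, x r * ((c * S r s) ^ k / k !) * x s := by
          refine (Summable.tsum_finsetSum fun r _ => ?_).symm
          exact summable_sum (fun s _ => hsum r s)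
  rw [hrw]
  refine tsum_nonneg fun k => ?_
  have heq : ∑ r, ∑ s, x r * ((c * S r s) ^ k / k !) * x s
      = (c ^ k / k !) * ∑ r, ∑ s, x r * (S r s) ^ k * x s := by
    rw [Finset.mul_sum]
    refine Finset.sum_congr rfl fun r _ => ?_
    rw [Finset.mul_sum]
    refine Finset.sum_congr rfl fun s _ => ?_
    rw [mul_pow]; ring
  rw [heq]
  exact mul_nonneg (div_nonneg (pow_nonneg hc _) (Nat.cast_nonneg _))
    (powQN hS k x)

/-- Theorem 1 of the paper: the categorical correlation matrix of the Fully
Exponential kernel is symmetric PSD with entries in `[0,1]`. -/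
theorem FE_correlation_posSemidef {n l : ℕ} (ε : ℝ) (hε : ε ∈ Set.Ioo (0 : ℝ) 1)
    (d : Fin l → Fin n → ℝ) (hd : ∀ i r, 0 ≤ d i r)
    (P : Fin l → Matrix (Fin n) (Fin n) ℝ)
    (hP : ∀ i, (P i).PosSemidef) (hPdiag : ∀ i r, P i r r = 1)
    (hP01 : ∀ i r s, P i r s ∈ Set.Icc (0 : ℝ) 1)
    (R : Matrix (Fin n) (Fin n) ℝ)
    (hR : ∀ r s : Fin n, R r s = if r = s then 1 else
      ∏ i, (Real.exp (-d i r - d i s) * (ε * Real.exp (-(Real.log ε) * P i r s)))) :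
    R.PosSemidef ∧ ∀ r s, R r s ∈ Set.Icc (0 : ℝ) 1 := by
  obtain ⟨hε0, hε1⟩ := hε
  set c : ℝ := -(Real.log ε) with hc
  have hcpos : 0 < c := by
    have := Real.log_neg hε0 hε1
    simp only [hc]; linarith
  -- the factor `ε * exp (c * p)` is in `[0,1]` when `p ∈ [0,1]`
  have hfac01 : ∀ (p : ℝ), 0 ≤ p → p ≤ 1 → ε * Real.exp (c * p) ∈ Set.Icc (0:ℝ) 1 := by
    intro p hp0 hp1
    constructor
    · positivity
    · have h1 : c * p ≤ c := by nlinarith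
      have h2 : Real.exp (c * p) ≤ Real.exp c := Real.exp_le_exp.mpr h1
      have h3 : Real.exp c = ε⁻¹ := by
        rw [hc, Real.exp_neg, Real.exp_log hε0]
      calc ε * Real.exp (c * p) ≤ ε * ε⁻¹ := by
            rw [← h3]; exact mul_le_mul_of_nonneg_left h2 hε0.le
        _ = 1 := mul_inv_cancel₀ hε0.ne'
  have hfacdiag : ∀ i (r : Fin n), ε * Real.exp (c * P i r r) = 1 := by
    intro i r
    rw [hPdiag, mul_one, hc, Real.exp_neg, Real.exp_log hε0, mul_inv_cancel₀ hε0.ne']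
  -- off-diagonal expression
  set M : Fin n → Fin n → ℝ := fun r s =>
    ∏ i, (Real.exp (-d i r - d i s) * (ε * Real.exp (c * P i r s))) with hM
  have hRM : ∀ r s : Fin n, r ≠ s → R r s = M r s := by
    intro r s hrs
    rw [hR, if_neg hrs]
  -- each entry of M is in [0,1]
  have hM01 : ∀ r s, M r s ∈ Set.Icc (0:ℝ) 1 := by
    intro r s
    have h01 : ∀ i : Fin l,
        Real.exp (-d i r - d i s) * (ε * Real.exp (c * P i r s)) ∈ Set.Icc (0:ℝ) 1 := by
      intro i
      have h1 : Real.exp (-d i r - d i s) ≤ 1 := by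
        rw [Real.exp_le_one_iff]
        have := hd i r; have := hd i s; linarith
      have h2 := hfac01 (P i r s) (hP01 i r s).1 (hP01 i r s).2
      constructor
      · exact mul_nonneg (Real.exp_pos _).le h2.1
      · calc Real.exp (-d i r - d i s) * (ε * Real.exp (c * P i r s))
            ≤ 1 * 1 := mul_le_mul h1 h2.2 h2.1 zero_le_one
          _ = 1 := one_mul 1
    exact ⟨Finset.prod_nonneg fun i _ => (h01 i).1,
      Finset.prod_le_one (fun i _ => (h01 i).1) (fun i _ => (h01 i).2)⟩
  -- diagonal of M
  have hMdiag : ∀ r, M r r = ∏ i, Real.exp (-d i r - d i r) := by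
    intro r
    rw [hM]
    exact Finset.prod_congr rfl fun i _ => by rw [hfacdiag, mul_one]
  -- entries in [0,1]
  have hR01 : ∀ r s, R r s ∈ Set.Icc (0:ℝ) 1 := by
    intro r s
    rcases eq_or_ne r s with h | h
    · rw [hR, if_pos h]; exact ⟨zero_le_one, le_refl 1⟩
    · rw [hRM r s h]; exact hM01 r s
  -- the sum matrix
  set Ssum : Matrix (Fin n) (Fin n) ℝ := ∑ i, P i with hSsum
  have hSpsd : Ssum.PosSemidef := by
    rw [hSsum]
    exact Finset.sum_induction _ _ (fun a b ha hb => ha.add hb) Matrix.PosSemidef.zero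
      (fun i _ => hP i)
  set w : Fin n → ℝ := fun r => Real.exp (-(∑ i, d i r)) with hw
  -- factored form of M
  have hMfac : ∀ r s, M r s = ε ^ l * (w r * w s * Real.exp (c * Ssum r s)) := by
    intro r s
    rw [hM]
    simp only []
    rw [Finset.prod_mul_distrib, Finset.prod_mul_distrib, Finset.prod_const,
      Finset.card_univ, Fintype.card_fin, ← Real.exp_sum, ← Real.exp_sum]
    have e1 : ∑ i, (-d i r - d i s) = -(∑ i, d i r) + -(∑ i, d i s) := by
      rw [Finset.sum_sub_distrib, Finset.sum_neg_distrib]; ring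
    have e2 : ∑ i, c * P i r s = c * Ssum r s := by
      rw [hSsum, ← Finset.mul_sum, Matrix.sum_apply]
    rw [e1, e2, Real.exp_add, hw]
    ring
  -- quadratic form of M is nonnegative
  have hMQ : ∀ x : Fin n → ℝ, 0 ≤ ∑ r, ∑ s, x r * M r s * x s := by
    intro x
    have h := expQN hSpsd hcpos.le (fun r => x r * w r)
    have e : ∑ r, ∑ s, x r * M r s * x s
        = ε ^ l * ∑ r, ∑ s, (x r * w r) * Real.exp (c * Ssum r s) * (x s * w s) := by
      rw [Finset.mul_sum]
      refine Finset.sum_congr rfl fun r _ => ?_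
      rw [Finset.mul_sum]
      refine Finset.sum_congr rfl fun s _ => ?_
      rw [hMfac]; ring
    rw [e]
    exact mul_nonneg (pow_nonneg hε0.le l) h
  -- symmetry of M, hence of R
  have hMsymm : ∀ r s, M r s = M s r := by
    intro r s
    rw [hM]
    refine Finset.prod_congr rfl fun i _ => ?_
    have h1 : -d i r - d i s = -d i s - d i r := by ring
    have h2 : P i r s = P i s r := by
      have := (hP i).isHermitian.apply s r
      simpa using this
    rw [h1, h2]
  have hRsymm : R.IsHermitian := by
    ext r s
    rw [Matrix.conjTranspose_apply, star_trivial]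
    rcases eq_or_ne s r with h | h
    · rw [h]
    · rw [hRM s r h, hRM r s (Ne.symm h), hMsymm]
  -- positive semidefiniteness
  refine ⟨⟨hRsymm, fun x => ?_⟩, hR01⟩
  have hdot : (x.sum fun i xi => x.sum fun j xj => star xi * R i j * xj) = ∑ r, ∑ s, x r * R r s * x s := by
    simp [Finsupp.sum_fintype]
  rw [hdot]
  have hsplit : ∑ r, ∑ s, x r * R r s * x s
      = (∑ r, ∑ s, x r * M r s * x s) + ∑ r, (1 - M r r) * x r ^ 2 := by
    rw [← Finset.sum_add_distrib]
    refine Finset.sum_congr rfl fun r _ => ?_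
    have e : ∀ s : Fin n, x r * R r s * x s
        = x r * M r s * x s + (if s = r then (1 - M r r) * x r ^ 2 else 0) := by
      intro s
      rcases eq_or_ne s r with h | h
      · subst h
        rw [if_pos rfl, hR, if_pos rfl]
        ring
      · rw [if_neg h, hRM r s (Ne.symm h), add_zero]
    rw [Finset.sum_congr rfl fun s _ => e s, Finset.sum_add_distrib,
      Finset.sum_ite_eq' Finset.univ r (fun _ => (1 - M r r) * x r ^ 2),
      if_pos (Finset.mem_univ r)]
  rw [hsplit]
  refine add_nonneg (hMQ x) (Finset.sum_nonneg fun r _ => ?_)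
  have h1 : M r r ≤ 1 := (hM01 r r).2
  exact mul_nonneg (by linarith) (sq_nonneg _)
end
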